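/- arXiv:1706.04457 — 4 statements merged into one kernel-verified Lean document; each statement's English description precedes it below -/
import Mathlib

section
/- For a suspension of elastic hard spheres in the ignited state with η² = (9+ΩSt²)/(4(1+(29/84)ΩSt²+(1/36)Ω²St⁴)) and λ² = (7+ΩSt²)/(14(1+(29/84)ΩSt²+(1/36)Ω²St⁴)), the first normal-stress difference N₁ = 18/(6+ΩSt²) and the second normal-stress difference satisfies −N₂ = 9(9+ΩSt²)ΩSt²/((6+ΩSt²)(252+87ΩSt²+7Ω²St⁴)) with N₁ = 2η sin 2φ, N₂ = 3λ² − N₁/2, and sin 2φ = η/(1+λ²). -/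
open Real

/-- For the ignited state of an elastic hard-sphere suspension, with
η² = (9+ΩSt²)/(4(1+(29/84)ΩSt²+(1/36)Ω²St⁴)),
λ² = (7+ΩSt²)/(14(1+(29/84)ΩSt²+(1/36)Ω²St⁴)),
sin 2φ = η/(1+λ²), N₁ = 2η sin 2φ and N₂ = 3λ² − N₁/2, one has
N₁ = 18/(6+ΩSt²) and
−N₂ = 9(9+ΩSt²)ΩSt²/((6+ΩSt²)(252+87ΩSt²+7Ω²St⁴)). -/
theorem normal_stress_differences_elastic (St Ω eta etasq lamsq sin2phi N1 N2 : ℝ)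
    (hSt : Real.sqrt (171 / 7) ≤ St) (hΩ0 : 0 < Ω) (hΩ1 : Ω ≤ 1)
    (hetasq : etasq = (9 + Ω * St ^ 2) /
      (4 * (1 + (29 / 84) * Ω * St ^ 2 + (1 / 36) * Ω ^ 2 * St ^ 4)))
    (heta : eta ^ 2 = etasq) (heta0 : 0 ≤ eta)
    (hlamsq : lamsq = (7 + Ω * St ^ 2) /
      (14 * (1 + (29 / 84) * Ω * St ^ 2 + (1 / 36) * Ω ^ 2 * St ^ 4)))
    (hsin : sin2phi = eta / (1 + lamsq))
    (hN1 : N1 = 2 * eta * sin2phi)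
    (hN2 : N2 = 3 * lamsq - N1 / 2) :
    N1 = 18 / (6 + Ω * St ^ 2) ∧
    -N2 = 9 * (9 + Ω * St ^ 2) * (Ω * St ^ 2) /
      ((6 + Ω * St ^ 2) * (252 + 87 * Ω * St ^ 2 + 7 * Ω ^ 2 * St ^ 4)) := by
  have hSt0 : (0 : ℝ) < St := lt_of_lt_of_le (Real.sqrt_pos.mpr (by norm_num)) hSt
  have hx : 0 < Ω * St ^ 2 := by positivity
  have hDen : 0 < 1 + lamsq := by rw [hlamsq]; positivity
  have hN1' : N1 = 2 * etasq / (1 + lamsq) := by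
    rw [hN1, hsin, ← heta]; ring
  have h1 : N1 = 18 / (6 + Ω * St ^ 2) := by
    rw [hN1', hetasq, hlamsq]
    rw [div_eq_div_iff (by positivity) (by positivity)]
    field_simp
    ring
  refine ⟨h1, ?_⟩
  rw [hN2, h1, hlamsq, neg_sub]
  have h2 : (0:ℝ) < 6 + Ω * St ^ 2 := by positivity
  have h3 : (0:ℝ) < 1 + 29 / 84 * Ω * St ^ 2 + 1 / 36 * Ω ^ 2 * St ^ 4 := by positivity
  have h4 : (0:ℝ) < 252 + 87 * Ω * St ^ 2 + 7 * Ω ^ 2 * St ^ 4 := by positivity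
  field_simp
  ring
end

section
/- Consider the cubic a₄ξ³ + a₃ξ² + a₁ = 0 with a₄ = −6890625(1+e)(107+193e)π⁴St⁴ν, a₃ = 5788125000π^{9/2}St, a₁ = −196000000(1+e)²π^{7/2}St⁴ν, together with the double-root condition 3a₄ξ² + 2a₃ξ = 0. Then the nonzero critical point is ξ_c = −2a₃/(3a₄) = 560√π/((1+e)(107+193e)St³ν), and substituting back yields the critical-surface relation St³ν = (3087000π²/((1+e)⁴(107+193e)²))^{1/3}. -/
open Real

/-- For the cubic a₄ξ³ + a₃ξ² + a₁ = 0 with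
a₄ = −6890625(1+e)(107+193e)π⁴St⁴ν, a₃ = 5788125000π^{9/2}St and
a₁ = −196000000(1+e)²π^{7/2}St⁴ν, together with the double-root condition
3a₄ξ² + 2a₃ξ = 0, the nonzero critical point is
ξ_c = −2a₃/(3a₄) = 560√π/((1+e)(107+193e)St³ν), and substituting back yields the
critical surface St³ν = (3087000π²/((1+e)⁴(107+193e)²))^{1/3}. -/
theorem critical_surface (St ν e a4 a3 a1 ξc : ℝ)
    (hSt : 0 < St) (hν : 0 < ν) (he0 : 0 ≤ e) (he1 : e ≤ 1)
    (ha4 : a4 = -6890625 * (1 + e) * (107 + 193 * e) * π ^ 4 * St ^ 4 * ν)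
    (ha3 : a3 = 5788125000 * π ^ 4 * Real.sqrt π * St)
    (ha1 : a1 = -196000000 * (1 + e) ^ 2 * π ^ 3 * Real.sqrt π * St ^ 4 * ν)
    (hξc : ξc = -2 * a3 / (3 * a4))
    (hroot : a4 * ξc ^ 3 + a3 * ξc ^ 2 + a1 = 0) :
    ξc = 560 * Real.sqrt π / ((1 + e) * (107 + 193 * e) * St ^ 3 * ν) ∧
    3 * a4 * ξc ^ 2 + 2 * a3 * ξc = 0 ∧
    St ^ 3 * ν = (3087000 * π ^ 2 / ((1 + e) ^ 4 * (107 + 193 * e) ^ 2))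
      ^ ((1 : ℝ) / 3) := by
  have hπ : (0:ℝ) < π := Real.pi_pos
  have hs : 0 < Real.sqrt π := Real.sqrt_pos.mpr hπ
  have hsq : Real.sqrt π ^ 2 = π := Real.sq_sqrt hπ.le
  set s := Real.sqrt π with hsdef
  have hA : (0:ℝ) < 1 + e := by linarith
  have hB : (0:ℝ) < 107 + 193 * e := by linarith
  have ha4ne : a4 ≠ 0 := by
    rw [ha4]
    nlinarith [mul_pos (mul_pos (mul_pos (mul_pos hA hB) (pow_pos hπ 4)) (pow_pos hSt 4)) hν]
  have h1 : ξc = 560 * Real.sqrt π / ((1 + e) * (107 + 193 * e) * St ^ 3 * ν) := by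
    rw [hξc, ha3, ha4]
    rw [div_eq_div_iff (by rw [ha4] at ha4ne; simpa using ha4ne) (by positivity)]
    ring
  have h2 : 3 * a4 * ξc = -2 * a3 := by
    rw [hξc]; field_simp
  have hT3 : (St ^ 3 * ν) ^ 3 = 3087000 * π ^ 2 / ((1 + e) ^ 4 * (107 + 193 * e) ^ 2) := by
    rw [h1, ha3, ha4, ha1] at hroot
    rw [eq_div_iff (by positivity)]
    field_simp at hroot
    rw [← hsdef] at hroot
    rw [← hsq] at hroot ⊢
    have hD : (196000000 * s ^ 7 * St * ((1 + e) * (107 + 193 * e)) ^ 3 * (St ^ 3 * ν) ^ 3) ≠ 0 := by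
      positivity
    apply mul_left_cancel₀ hD
    linear_combination (-(St * ((1 + e) * (107 + 193 * e)) ^ 3 * (St ^ 3 * ν) ^ 3)) * hroot
  refine ⟨h1, by linear_combination ξc * h2, ?_⟩
  rw [← hT3]
  rw [← Real.rpow_natCast (St ^ 3 * ν) 3, ← Real.rpow_mul (by positivity)]
  norm_num
end

section
/- Suppose the traceless part of the collisional source satisfies ℵ_{⟨αβ⟩} = B·P_{⟨αβ⟩} for some scalar B ≠ 0, and the steady uniform-shear second-moment balance P_{δβ}u_{α,δ} + P_{δα}u_{β,δ} = ℵ_{αβ} holds with velocity field u = (γ̇y, 0, 0). Then ℵ₂₂ = 0 = ℵ₃₃, and consequently the second normal-stress difference N₂ = P_{⟨22⟩} − P_{⟨33⟩} = 0. -/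
open Matrix

/-- If the traceless part of the collisional source satisfies ℵ_{⟨αβ⟩} = B·P_{⟨αβ⟩}
with B ≠ 0, and the steady uniform-shear second-moment balance
P_{δβ}u_{α,δ} + P_{δα}u_{β,δ} = ℵ_{αβ} holds for the velocity field u = (γ̇y, 0, 0),
then ℵ₂₂ = 0 = ℵ₃₃ and the second normal-stress difference
N₂ = P_{⟨22⟩} − P_{⟨33⟩} vanishes. -/
theorem N2_vanishes_for_linear_source (γ B : ℝ) (hB : B ≠ 0)
    (P ℵ G : Matrix (Fin 3) (Fin 3) ℝ)
    (hPsymm : Pᵀ = P)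
    (hG : G = Matrix.of ![![0, γ, 0], ![0, 0, 0], ![0, 0, 0]])
    (hdecomp : ℵ = (Matrix.trace ℵ / 3) • (1 : Matrix (Fin 3) (Fin 3) ℝ) +
      B • (P - (Matrix.trace P / 3) • (1 : Matrix (Fin 3) (Fin 3) ℝ)))
    (hbalance : G * P + (G * P)ᵀ = ℵ) :
    ℵ 1 1 = 0 ∧ ℵ 2 2 = 0 ∧
    (P - (Matrix.trace P / 3) • (1 : Matrix (Fin 3) (Fin 3) ℝ)) 1 1 -
      (P - (Matrix.trace P / 3) • (1 : Matrix (Fin 3) (Fin 3) ℝ)) 2 2 = 0 := by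
  have h11 : ℵ 1 1 = 0 := by
    rw [← hbalance, hG]
    simp [Matrix.mul_apply, Matrix.add_apply, Matrix.transpose_apply, Fin.sum_univ_three, Matrix.vecMul, dotProduct, Matrix.vecHead, Matrix.vecTail]
  have h22 : ℵ 2 2 = 0 := by
    rw [← hbalance, hG]
    simp [Matrix.mul_apply, Matrix.add_apply, Matrix.transpose_apply, Fin.sum_univ_three, Matrix.vecMul, dotProduct, Matrix.vecHead, Matrix.vecTail]
  refine ⟨h11, h22, ?_⟩
  have e1 := congrFun (congrFun hdecomp 1) 1
  have e2 := congrFun (congrFun hdecomp 2) 2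
  rw [h11] at e1
  rw [h22] at e2
  simp only [Matrix.add_apply, Matrix.smul_apply, Matrix.one_apply, Matrix.sub_apply,
    smul_eq_mul] at e1 e2 ⊢
  have : B * ((P 1 1 - Matrix.trace P / 3 * 1) - (P 2 2 - Matrix.trace P / 3 * 1)) = 0 := by
    linear_combination e2 - e1
  have := mul_eq_zero.mp this
  norm_num at this ⊢
  rcases this with h | h
  · exact absurd h hB
  · linarith
end

section
/- The quadratic 𝔞η⁴ + 𝔟η² + 𝔠 = 0 in η² with 𝔞 = 9(1−e²)²ν²T³/(25π) > 0, 𝔠 = (3T/St − 16ν(1+e)²/(35π) + 6(1−e²)νT^{3/2}/√π)² ≥ 0 and 𝔟 ≤ −T²cos²2φ + (terms) has the root η² = −𝔟/(2𝔞) − (1/(2𝔞))√(𝔟² − 4𝔞𝔠); for e = 1 (so 𝔞 = 0, 𝔟 = −T²cos²2φ) the solution degenerates to η² = −𝔠/𝔟 = (3T/St − 64ν/(35π))²T^{−2}sec²2φ, which is strictly positive whenever 3T/St ≠ 64ν/(35π) and cos 2φ ≠ 0. -/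
open Real

/-- The quadratic 𝔞η⁴ + 𝔟η² + 𝔠 = 0 in η², with
𝔞 = 9(1−e²)²ν²T³/(25π), 𝔠 = (3T/St − 16ν(1+e)²/(35π) + 6(1−e²)νT^{3/2}/√π)² and
𝔟 = (6(1−e²)νT^{3/2}/(5√π))(3T/St − 16ν(1+e)²/(35π) + 6(1−e²)νT^{3/2}/√π) − T²cos²2φ,
has the root η² = −𝔟/(2𝔞) − (1/(2𝔞))√(𝔟²−4𝔞𝔠) when e < 1 and the discriminant is
nonnegative; for e = 1 (so 𝔞 = 0, 𝔟 = −T²cos²2φ) the solution degenerates to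
η² = −𝔠/𝔟 = (3T/St − 64ν/(35π))²T⁻²sec²2φ, strictly positive whenever
3T/St ≠ 64ν/(35π) and cos 2φ ≠ 0. -/
theorem temperature_anisotropy_quadratic (T St ν e φ 𝔞 𝔟 𝔠 : ℝ)
    (hT : 0 < T) (hSt : 0 < St) (hν : 0 < ν) (he0 : 0 ≤ e) (he1 : e ≤ 1)
    (ha : 𝔞 = 9 * (1 - e ^ 2) ^ 2 * ν ^ 2 * T ^ 3 / (25 * π))
    (hb : 𝔟 = (6 * (1 - e ^ 2) * ν * T ^ (3 / 2 : ℝ) / (5 * Real.sqrt π)) *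
      (3 * T / St - 16 * ν * (1 + e) ^ 2 / (35 * π) +
        6 * (1 - e ^ 2) * ν * T ^ (3 / 2 : ℝ) / Real.sqrt π) -
      T ^ 2 * Real.cos (2 * φ) ^ 2)
    (hc : 𝔠 = (3 * T / St - 16 * ν * (1 + e) ^ 2 / (35 * π) +
      6 * (1 - e ^ 2) * ν * T ^ (3 / 2 : ℝ) / Real.sqrt π) ^ 2) :
    (e < 1 → 0 ≤ 𝔟 ^ 2 - 4 * 𝔞 * 𝔠 →
      𝔞 * (-𝔟 / (2 * 𝔞) - Real.sqrt (𝔟 ^ 2 - 4 * 𝔞 * 𝔠) / (2 * 𝔞)) ^ 2 +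
        𝔟 * (-𝔟 / (2 * 𝔞) - Real.sqrt (𝔟 ^ 2 - 4 * 𝔞 * 𝔠) / (2 * 𝔞)) + 𝔠 = 0) ∧
    (e = 1 →
      𝔞 = 0 ∧ 𝔟 = -(T ^ 2 * Real.cos (2 * φ) ^ 2) ∧
      (Real.cos (2 * φ) ≠ 0 →
        𝔟 * ((3 * T / St - 64 * ν / (35 * π)) ^ 2 * T⁻¹ ^ 2 / Real.cos (2 * φ) ^ 2) +
          𝔠 = 0 ∧
        (3 * T / St ≠ 64 * ν / (35 * π) →
          0 < (3 * T / St - 64 * ν / (35 * π)) ^ 2 * T⁻¹ ^ 2 /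
            Real.cos (2 * φ) ^ 2))) := by
  constructor
  · intro he hD
    have he2 : 0 < 1 - e ^ 2 := by nlinarith
    have ha0 : 0 < 𝔞 := by
      rw [ha]
      positivity
    have hs : Real.sqrt (𝔟 ^ 2 - 4 * 𝔞 * 𝔠) ^ 2 = 𝔟 ^ 2 - 4 * 𝔞 * 𝔠 :=
      Real.sq_sqrt hD
    have ha0' : 𝔞 ≠ 0 := ne_of_gt ha0
    set s := Real.sqrt (𝔟 ^ 2 - 4 * 𝔞 * 𝔠) with hsdef
    have key : 𝔞 * (-𝔟 / (2 * 𝔞) - s / (2 * 𝔞)) ^ 2 +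
        𝔟 * (-𝔟 / (2 * 𝔞) - s / (2 * 𝔞)) + 𝔠 =
        (s ^ 2 - (𝔟 ^ 2 - 4 * 𝔞 * 𝔠)) / (4 * 𝔞) := by
      field_simp
      ring
    rw [key, hs, sub_self, zero_div]
  · intro he
    subst he
    have hπ : (0 : ℝ) < π := Real.pi_pos
    have ha' : 𝔞 = 0 := by rw [ha]; norm_num
    have h11 : (1 : ℝ) - 1 ^ 2 = 0 := by norm_num
    have hb' : 𝔟 = -(T ^ 2 * Real.cos (2 * φ) ^ 2) := by
      rw [hb, h11]; ring
    have hc' : 𝔠 = (3 * T / St - 64 * ν / (35 * π)) ^ 2 := by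
      rw [hc, h11]
      have : 16 * ν * (1 + 1 : ℝ) ^ 2 / (35 * π) = 64 * ν / (35 * π) := by ring
      rw [this]; ring
    refine ⟨ha', hb', fun hcos => ⟨?_, fun hne => ?_⟩⟩
    · rw [hb', hc']
      field_simp
      ring
    · have h0 : 3 * T / St - 64 * ν / (35 * π) ≠ 0 := sub_ne_zero.mpr hne
      positivity
end
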